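/- Consider an offline KL-regularized contextual bandit with contexts S = [S], actions [A+1], η > 0, C ∈ (2, e^η], reference policy π_ref(i|s) = 1/(AC) for i ≤ A and π_ref(A+1|s) = (C−1)/C, reward r(s,i) = 1 for i ∈ [A] and r(s,A+1) = 1 − η⁻¹log(C−1). Then the optimal regularized policy satisfies π*(i|s) = 1/(2A) for i ∈ [A] and π*(A+1|s) = 1/2, and hence the single-policy concentrability C^{π*} = sup_{s,a} π*(a|s)/π_ref(a|s) equals C/2. -/

import Mathlib

open Finset Real

/-- For the explicit contextual-bandit instance with `π_ref(i|s) = 1/(AC)` for `i ≤ A`,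
`π_ref(A+1|s) = (C−1)/C`, reward `1` on the first `A` arms and `1 − η⁻¹log(C−1)` on the
last arm, the KL-regularized optimal policy is `π*(i|s) = 1/(2A)` for `i ∈ [A]` and
`π*(A+1|s) = 1/2`, and the single-policy concentrability equals `C/2`. -/
theorem explicit_instance_concentrability
    (S A : ℕ) (hS : 0 < S) (hA : 0 < A)
    (η C : ℝ) (hη : 0 < η) (hC : 2 < C) (hC' : C ≤ Real.exp η)
    (pref r pstar : Fin S → Fin (A + 1) → ℝ)
    (hpref : ∀ s i, pref s i = if (i : ℕ) < A then 1 / ((A : ℝ) * C) else (C - 1) / C)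
    (hr : ∀ s i, r s i = if (i : ℕ) < A then 1 else 1 - η⁻¹ * Real.log (C - 1))
    (hpstar : ∀ s i, pstar s i =
      pref s i * Real.exp (η * r s i) / ∑ j, pref s j * Real.exp (η * r s j)) :
    (∀ s (i : Fin (A + 1)), ((i : ℕ) < A → pstar s i = 1 / (2 * (A : ℝ))) ∧
      ((i : ℕ) = A → pstar s i = 1 / 2)) ∧
    (∀ s i, pstar s i / pref s i ≤ C / 2) ∧
    (∃ s i, pstar s i / pref s i = C / 2) := by
  have hC0 : (0:ℝ) < C := by linarith
  have hC1 : (0:ℝ) < C - 1 := by linarith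
  have hA0 : (0:ℝ) < A := by exact_mod_cast hA
  have hE : (0:ℝ) < Real.exp η := Real.exp_pos η
  have hlast : Real.exp (η * (1 - η⁻¹ * Real.log (C - 1))) = Real.exp η / (C - 1) := by
    have : η * (1 - η⁻¹ * Real.log (C - 1)) = η - Real.log (C - 1) := by
      field_simp
    rw [this, Real.exp_sub, Real.exp_log hC1]
  have hsum : ∀ s, (∑ j, pref s j * Real.exp (η * r s j)) = 2 * Real.exp η / C := by
    intro s
    rw [Fin.sum_univ_castSucc]
    have h1 : ∀ j : Fin A, pref s j.castSucc * Real.exp (η * r s j.castSucc)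
        = Real.exp η / ((A:ℝ) * C) := by
      intro j
      rw [hpref, hr]
      simp only [Fin.coe_castSucc, j.isLt, if_true, mul_one]
      ring
    have h2 : pref s (Fin.last A) * Real.exp (η * r s (Fin.last A))
        = Real.exp η / C := by
      rw [hpref, hr]
      simp only [Fin.val_last, lt_irrefl, if_false]
      rw [hlast]
      field_simp
    rw [Finset.sum_congr rfl (fun j _ => h1 j), Finset.sum_const, h2]
    simp only [card_univ, Fintype.card_fin, nsmul_eq_mul]
    field_simp
    ring
  have hps : ∀ (s : Fin S) (i : Fin (A+1)), ((i : ℕ) < A → pstar s i = 1 / (2 * (A : ℝ))) ∧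
      ((i : ℕ) = A → pstar s i = 1 / 2) := by
    intro s i
    constructor
    · intro hi
      rw [hpstar, hsum, hpref, hr]
      simp only [hi, if_true, mul_one]
      field_simp
    · intro hi
      rw [hpstar, hsum, hpref, hr]
      simp only [hi, lt_irrefl, if_false]
      rw [hlast]
      field_simp
  have hratio1 : (1 / (2 * (A:ℝ))) / (1 / ((A:ℝ) * C)) = C / 2 := by
    field_simp
  refine ⟨?_, ?_, ?_⟩
  · intro s i
    constructor
    · intro hi
      exact (hps s i).1 hi
    · intro hi
      exact (hps s i).2 hi
  · intro s i
    rcases lt_or_ge (i : ℕ) A with hi | hi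
    · rw [(hps s i).1 hi, hpref]
      simp only [hi, if_true]
      rw [hratio1]
    · have hi' : (i : ℕ) = A := le_antisymm (Nat.lt_succ_iff.mp i.isLt) hi
      rw [(hps s i).2 hi', hpref]
      simp only [hi', lt_irrefl, if_false]
      have h : (1/2 : ℝ) / ((C-1)/C) = C / (2*(C-1)) := by
        field_simp
      rw [h, div_le_div_iff₀ (by positivity) (by norm_num)]
      nlinarith
  · refine ⟨⟨0, hS⟩, ⟨0, Nat.succ_pos A⟩, ?_⟩
    have h0 : ((⟨0, Nat.succ_pos A⟩ : Fin (A+1)) : ℕ) < A := hA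
    rw [(hps _ _).1 h0, hpref]
    simp only [h0, if_true]
    exact hratio1
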